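/- For integers d ≥ u + 1 ≥ 3 and ℓ with 0 ≤ ℓ ≤ u − 2, it holds that d + u ≤ 2·(1 + (d−ℓ)/u)^(u/2) · (1 + u/(d−ℓ))^((d−ℓ)/2). -/

import Mathlib

/-- For integers `d ≥ u + 1 ≥ 3` and `0 ≤ ℓ ≤ u - 2`:
`d + u ≤ 2·(1 + (d-ℓ)/u)^(u/2)·(1 + u/(d-ℓ))^((d-ℓ)/2)`. -/
theorem sum_le_double_pow (d u ℓ : ℕ) (hu : 2 ≤ u) (hd : u + 1 ≤ d) (hℓ : ℓ + 2 ≤ u) :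
    (d : ℝ) + u ≤
      2 * (1 + ((d : ℝ) - ℓ) / u) ^ ((u : ℝ) / 2) *
        (1 + (u : ℝ) / ((d : ℝ) - ℓ)) ^ (((d : ℝ) - ℓ) / 2) := by
  have hu' : (2 : ℝ) ≤ u := by exact_mod_cast hu
  have hd' : (u : ℝ) + 1 ≤ d := by exact_mod_cast hd
  have hℓ' : (ℓ : ℝ) + 2 ≤ u := by exact_mod_cast hℓ
  have hupos : (0 : ℝ) < u := by linarith
  have hdlpos : (0 : ℝ) < (d : ℝ) - ℓ := by linarith
  set a : ℝ := ((d : ℝ) - ℓ) / u with ha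
  set b : ℝ := (u : ℝ) / ((d : ℝ) - ℓ) with hb
  have hanneg : 0 ≤ a := le_of_lt (div_pos hdlpos hupos)
  have hbnneg : 0 ≤ b := le_of_lt (div_pos hupos hdlpos)
  have h1 : 1 + ((u : ℝ) / 2) * a ≤ (1 + a) ^ ((u : ℝ) / 2) :=
    one_add_mul_self_le_rpow_one_add (by linarith) (by linarith)
  have h2 : 1 + (((d : ℝ) - ℓ) / 2) * b ≤ (1 + b) ^ (((d : ℝ) - ℓ) / 2) :=
    one_add_mul_self_le_rpow_one_add (by linarith) (by linarith)
  have ea : ((u : ℝ) / 2) * a = ((d : ℝ) - ℓ) / 2 := by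
    field_simp [ha]; rw [ha]; field_simp
  have eb : (((d : ℝ) - ℓ) / 2) * b = (u : ℝ) / 2 := by
    field_simp [hb]; rw [hb]; field_simp
  rw [ea] at h1
  rw [eb] at h2
  have hkey : (d : ℝ) + u ≤ 2 * (1 + ((d : ℝ) - ℓ) / 2) * (1 + (u : ℝ) / 2) := by
    nlinarith [mul_nonneg (by linarith : (0:ℝ) ≤ (u:ℝ) - ℓ - 2) ((by linarith : (0:ℝ) ≤ (d:ℝ) - u))]
  have hp1 : (0 : ℝ) ≤ 1 + ((d : ℝ) - ℓ) / 2 := by linarith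
  calc (d : ℝ) + u ≤ 2 * (1 + ((d : ℝ) - ℓ) / 2) * (1 + (u : ℝ) / 2) := hkey
    _ ≤ 2 * (1 + a) ^ ((u : ℝ) / 2) * (1 + b) ^ (((d : ℝ) - ℓ) / 2) := by
        have := mul_le_mul h1 h2 (by linarith) (Real.rpow_nonneg (by linarith) _)
        nlinarith [this]
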